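/- arXiv:1311.2324 — 3 statements merged into one kernel-verified Lean document; each statement's English description precedes it below -/
import Mathlib

section
/- Assume pₙ < n·ln(n·ln n) for all n ≥ 6, and let U : ℝ → (1, ∞) be the inverse of z ↦ z·ln(z·ln z). Then for all real x ≥ 11, π(x) > U(x) − 1. -/
noncomputable def nthPrime (n : ℕ) : ℕ := Nat.nth Nat.Prime (n - 1)
noncomputable def primePi (x : ℝ) : ℕ := Nat.primeCounting ⌊x⌋₊

lemma f_mono {a b : ℝ} (hb : 6 ≤ b) (hab : b ≤ a) :
    b * Real.log (b * Real.log b) ≤ a * Real.log (a * Real.log a) := by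
  have hlb : Real.log b ≤ Real.log a := Real.log_le_log (by linarith) hab
  have h1 : (1:ℝ) ≤ Real.log b := by
    rw [show (1:ℝ) = Real.log (Real.exp 1) from (Real.log_exp 1).symm]
    exact Real.log_le_log (Real.exp_pos 1)
      (le_trans (Real.exp_one_lt_d9.le.trans (by norm_num)) hb)
  have hbb : b * Real.log b ≤ a * Real.log a :=
    mul_le_mul hab hlb (by linarith) (by linarith)
  have h2 : Real.log (b * Real.log b) ≤ Real.log (a * Real.log a) :=
    Real.log_le_log (by nlinarith) hbb
  have h3 : 0 ≤ Real.log (b * Real.log b) := Real.log_nonneg (by nlinarith)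
  exact mul_le_mul hab h2 h3 (by linarith)

theorem primePi_gt_U_sub_one
    (hp : ∀ n : ℕ, 6 ≤ n → (nthPrime n : ℝ) < n * Real.log (n * Real.log n))
    (U : ℝ → ℝ)
    (hU : ∀ y : ℝ, 1 < U y ∧ U y * Real.log (U y * Real.log (U y)) = y) :
    ∀ x : ℝ, 11 ≤ x → U x - 1 < (primePi x : ℝ) := by
  intro x hx
  set n := primePi x with hn
  have h11 : (11:ℕ) ≤ ⌊x⌋₊ := Nat.le_floor (by exact_mod_cast hx)
  have hn5 : 5 ≤ n := by
    have h := Nat.monotone_primeCounting h11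
    have h5 : Nat.primeCounting 11 = 5 := by decide
    rw [hn, primePi]
    omega
  -- x < nthPrime (n+1)
  have hx_lt : x < (nthPrime (n + 1) : ℝ) := by
    have h1 : ⌊x⌋₊ + 1 ≤ Nat.nth Nat.Prime n := by
      have := Nat.le_nth_count Nat.infinite_setOf_prime (⌊x⌋₊ + 1)
      simpa [hn, primePi, Nat.primeCounting, Nat.primeCounting'] using this
    have h2 : x < (⌊x⌋₊ : ℝ) + 1 := Nat.lt_floor_add_one x
    have : ((⌊x⌋₊ + 1 : ℕ) : ℝ) ≤ (nthPrime (n + 1) : ℝ) := by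
      simp only [nthPrime, Nat.add_sub_cancel]
      exact_mod_cast h1
    push_cast at this
    linarith
  by_contra h
  push_neg at h
  have hUx : ((n : ℝ) + 1) ≤ U x := by linarith
  have h6 : (6:ℝ) ≤ (n : ℝ) + 1 := by
    have : (5:ℝ) ≤ (n:ℝ) := by exact_mod_cast hn5
    linarith
  have hmono := f_mono h6 hUx
  have hpn := hp (n + 1) (by omega)
  push_cast at hpn
  have hUeq := (hU x).2
  linarith
end

section
/- Fix ε > 0 and suppose that for all n ≥ 6, pₙ < n·((1+ε)·ln n − 1 − ln ε). Let W be the principal Lambert W function (W(y)·e^{W(y)} = y, W(y) > 0 for y > 0). Then for all real x ≥ 11, π(x) > (x/(1+ε)) / W((x/(1+ε))·(ε·e)^{−1/(1+ε)}) − 1. -/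
lemma mul_log_lt_aux {w s : ℝ} (hw : 1 < w) (hs : 0 < s)
    (h : w * Real.log w < s * Real.log s) : w < s := by
  by_contra hle
  push_neg at hle
  rcases le_or_gt s 1 with h1 | h1
  · have hls : Real.log s ≤ 0 := Real.log_nonpos hs.le h1
    have hlw : 0 < Real.log w := Real.log_pos hw
    nlinarith
  · have hlw : 0 < Real.log s := Real.log_pos h1
    have h2 : Real.log s ≤ Real.log w := Real.log_le_log hs hle
    nlinarith

theorem primePi_gt_W_bound (ε : ℝ) (hε : 0 < ε)
    (hp : ∀ n : ℕ, 6 ≤ n →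
      (nthPrime n : ℝ) < n * ((1 + ε) * Real.log n - 1 - Real.log ε))
    (W : ℝ → ℝ)
    (hW : ∀ y : ℝ, 0 < y → W y * Real.exp (W y) = y ∧ 0 < W y) :
    ∀ x : ℝ, 11 ≤ x →
      (x / (1 + ε)) /
        W ((x / (1 + ε)) * (ε * Real.exp 1) ^ (-(1 : ℝ) / (1 + ε))) - 1
        < (primePi x : ℝ) := by
  intro x hx
  have h1ε : (0:ℝ) < 1 + ε := by linarith
  have hx0 : (0:ℝ) < x := by linarith
  set t := primePi x with ht
  have hfl : 11 ≤ ⌊x⌋₊ := Nat.le_floor (by exact_mod_cast hx)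
  have ht5 : 5 ≤ t := by
    have hmono : Nat.primeCounting 11 ≤ Nat.primeCounting ⌊x⌋₊ :=
      Nat.monotone_primeCounting hfl
    have h11 : Nat.primeCounting 11 = 5 := by decide
    have htt : t = Nat.primeCounting ⌊x⌋₊ := rfl
    omega
  have hxp : x < (nthPrime (t + 1) : ℝ) := by
    have h1 : ⌊x⌋₊ + 1 ≤ Nat.nth Nat.Prime t := by
      have := Nat.le_nth_count Nat.infinite_setOf_prime (⌊x⌋₊ + 1)
      simpa [ht, primePi, Nat.primeCounting, Nat.primeCounting'] using this
    have h2 : x < (⌊x⌋₊ : ℝ) + 1 := Nat.lt_floor_add_one x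
    have h3 : nthPrime (t + 1) = Nat.nth Nat.Prime t := by simp [nthPrime]
    rw [h3]
    calc x < (⌊x⌋₊ : ℝ) + 1 := h2
      _ ≤ (Nat.nth Nat.Prime t : ℝ) := by exact_mod_cast h1
  have hbound := hp (t + 1) (by omega)
  set N : ℝ := ((t + 1 : ℕ) : ℝ) with hN
  have hN0 : (0:ℝ) < N := by positivity
  have hxN : x < N * ((1 + ε) * Real.log N - 1 - Real.log ε) := lt_trans hxp hbound
  set α : ℝ := (ε * Real.exp 1) ^ (-(1 : ℝ) / (1 + ε)) with hα
  have hα0 : 0 < α := Real.rpow_pos_of_pos (by positivity) _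
  set u : ℝ := x / (1 + ε) with hu
  have hu0 : 0 < u := div_pos hx0 h1ε
  have hy0 : 0 < u * α := mul_pos hu0 hα0
  obtain ⟨hz1, hz0⟩ := hW (u * α) hy0
  set z : ℝ := W (u * α) with hz
  have hlogα : Real.log α = -(Real.log ε + 1) / (1 + ε) := by
    rw [hα, Real.log_rpow (by positivity), Real.log_mul hε.ne' (Real.exp_pos 1).ne',
      Real.log_exp]
    ring
  have hkey : u < N * Real.log (N * α) := by
    rw [Real.log_mul hN0.ne' hα0.ne', hlogα, hu, div_lt_iff₀ h1ε]
    have heq : N * (Real.log N + -(Real.log ε + 1) / (1 + ε)) * (1 + ε)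
        = N * ((1 + ε) * Real.log N - 1 - Real.log ε) := by
      field_simp
      ring_nf
    rw [heq]
    exact hxN
  have hwlt : Real.exp z < N * α := by
    apply mul_log_lt_aux (by nlinarith [Real.add_one_le_exp z]) (mul_pos hN0 hα0)
    rw [Real.log_exp]
    calc Real.exp z * z = u * α := by rw [← hz1]; ring
      _ < (N * Real.log (N * α)) * α := mul_lt_mul_of_pos_right hkey hα0
      _ = N * α * Real.log (N * α) := by ring
  have hfin : u / z < N := by
    have huz : u / z = Real.exp z / α := by
      rw [div_eq_div_iff hz0.ne' hα0.ne'] at *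
      nlinarith [hz1]
    rw [huz, div_lt_iff₀ hα0]
    exact hwlt
  have hNt : N = (t : ℝ) + 1 := by rw [hN]; push_cast; ring
  linarith
end

section
/- Let W₋₁ : [−1/e, 0) → (−∞, −1] denote the branch of Lambert W satisfying W₋₁(y)·exp(W₋₁(y)) = y and W₋₁(y) ≤ −1. Suppose that n > pₙ / ln pₙ for all n ≥ 7 (equivalently π(x) > x/ln x for x ≥ 17). Then for all n ≥ 7, pₙ < −n · W₋₁(−1/n). -/
theorem nthPrime_lt_neg_mul_Wm1 (Wm1 : ℝ → ℝ)
    (hW : ∀ t : ℝ, -1 / Real.exp 1 ≤ t → t < 0 →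
      Wm1 t * Real.exp (Wm1 t) = t ∧ Wm1 t ≤ -1)
    (hn : ∀ n : ℕ, 7 ≤ n → (nthPrime n : ℝ) / Real.log (nthPrime n) < n) :
    ∀ n : ℕ, 7 ≤ n → (nthPrime n : ℝ) < -(n : ℝ) * Wm1 (-1 / n) := by
  intro n hn7
  have hnR : (7:ℝ) ≤ n := by exact_mod_cast hn7
  have hnpos : (0:ℝ) < n := by linarith
  have hexp7 : Real.exp 1 ≤ n := by
    have := Real.exp_one_lt_d9
    linarith
  have ht1 : -1 / Real.exp 1 ≤ -1 / (n:ℝ) := by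
    rw [neg_div, neg_div, neg_le_neg_iff]
    exact one_div_le_one_div_of_le (Real.exp_pos 1) hexp7
  have ht2 : -1 / (n:ℝ) < 0 := by
    apply div_neg_of_neg_of_pos <;> linarith
  obtain ⟨hwe, hw1⟩ := hW _ ht1 ht2
  set w := Wm1 (-1 / (n:ℝ)) with hwdef
  have hwneg : w < 0 := lt_of_le_of_lt hw1 (by norm_num)
  set x : ℝ := -(n:ℝ) * w with hxdef
  have hx0 : (0:ℝ) < x := by nlinarith
  have hxe : x * Real.exp w = 1 := by
    have h : x * Real.exp w = -(n:ℝ) * (w * Real.exp w) := by ring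
    rw [h, hwe]
    field_simp
  have hxexp : x = Real.exp (-w) := by
    rw [Real.exp_neg]
    exact eq_inv_of_mul_eq_one_left hxe
  have hlogx : Real.log x = -w := by rw [hxexp, Real.log_exp]
  have hex : Real.exp 1 ≤ x := by
    rw [hxexp]
    exact Real.exp_le_exp.mpr (by linarith)
  by_contra h
  push_neg at h
  have hp : x ≤ (nthPrime n : ℝ) := h
  have hep : Real.exp 1 ≤ (nthPrime n : ℝ) := le_trans hex hp
  have hanti := Real.log_div_self_antitoneOn (by exact hex) (by exact hep) hp
  dsimp only at hanti
  -- hanti : log pₙ / pₙ ≤ log x / x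
  have hlogp : 1 ≤ Real.log (nthPrime n : ℝ) := by
    have := Real.log_le_log (Real.exp_pos 1) hep
    rwa [Real.log_exp] at this
  have hppos : (0:ℝ) < (nthPrime n : ℝ) := lt_of_lt_of_le hx0 hp
  have hlt := hn n hn7
  -- log x / x = 1/n
  have hval : Real.log x / x = 1 / n := by
    rw [hlogx, hxdef]
    rw [div_eq_div_iff (by nlinarith) hnpos.ne']
    ring
  rw [hval] at hanti
  -- hanti : log pₙ / pₙ ≤ 1/n ; hlt : pₙ / log pₙ < n
  have h1 : (n:ℝ) * Real.log (nthPrime n : ℝ) ≤ (nthPrime n : ℝ) := by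
    rw [div_le_div_iff₀ hppos hnpos] at hanti
    linarith
  have h2 : (nthPrime n : ℝ) < n * Real.log (nthPrime n : ℝ) := by
    rw [div_lt_iff₀ (by linarith)] at hlt
    linarith [hlt]
  linarith
end
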